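/- Let V be a real Hilbert space, K ⊆ V nonempty closed convex, a : V × V → ℝ a continuous, symmetric, coercive bilinear form, and L ∈ V*. Then there exists a unique u ∈ K such that a(u, v − u) ≥ L(v − u) for all v ∈ K (Lions–Stampacchia theorem). -/

import Mathlib

open RealInnerProductSpace

theorem stmt_15 {V : Type*} [NormedAddCommGroup V] [InnerProductSpace ℝ V] [CompleteSpace V]
    (K : Set V) (hKne : K.Nonempty) (hKcl : IsClosed K) (hKconv : Convex ℝ K)
    (a : V →L[ℝ] V →L[ℝ] ℝ)
    (hsymm : ∀ w v : V, a w v = a v w)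
    (M : ℝ) (hbdd : ∀ w v : V, |a w v| ≤ M * ‖w‖ * ‖v‖)
    (α : ℝ) (hα : 0 < α) (hcoer : ∀ v : V, α * ‖v‖ ^ 2 ≤ a v v)
    (L : V →L[ℝ] ℝ) :
    ∃! u : V, u ∈ K ∧ ∀ v ∈ K, L (v - u) ≤ a u (v - u) := by
  -- uniqueness (proved first, used at the end)
  have uniq : ∀ u₁ u₂ : V,
      (u₁ ∈ K ∧ ∀ v ∈ K, L (v - u₁) ≤ a u₁ (v - u₁)) →
      (u₂ ∈ K ∧ ∀ v ∈ K, L (v - u₂) ≤ a u₂ (v - u₂)) → u₁ = u₂ := by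
    intro u₁ u₂ h₁ h₂
    have e₁ := h₁.2 u₂ h₂.1
    have e₂ := h₂.2 u₁ h₁.1
    have hdd : a (u₁ - u₂) (u₁ - u₂) ≤ 0 := by
      have hsplit : a (u₁ - u₂) (u₁ - u₂) = a u₁ (u₁ - u₂) - a u₂ (u₁ - u₂) := by
        simp [map_sub]; ring
      have h21 : L (u₂ - u₁) = - L (u₁ - u₂) := by simp [map_sub]
      have h21' : a u₁ (u₂ - u₁) = - a u₁ (u₁ - u₂) := by simp [map_sub]
      rw [hsplit]
      rw [h21, h21'] at e₁
      linarith
    have hc := hcoer (u₁ - u₂)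
    have hsqz : ‖u₁ - u₂‖ ^ 2 = 0 :=
      le_antisymm (by nlinarith) (sq_nonneg _)
    exact sub_eq_zero.mp (norm_eq_zero.mp (by
      have := sq_eq_zero_iff.mp hsqz; exact this))
  -- projection onto K
  have hKcomp : IsComplete K := hKcl.isComplete
  obtain ⟨P, hPK, hPinf⟩ :
      ∃ P : V → V, (∀ u, P u ∈ K) ∧ ∀ u, ‖u - P u‖ = ⨅ w : K, ‖u - w‖ := by
    choose P h1 h2 using exists_norm_eq_iInf_of_complete_convex hKne hKcomp hKconv
    exact ⟨P, h1, h2⟩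
  have hP : ∀ u, ∀ w ∈ K, ⟪u - P u, w - P u⟫ ≤ 0 := fun u =>
    (norm_eq_iInf_iff_real_inner_le_zero hKconv (hPK u)).1 (hPinf u)
  -- projection is nonexpansive
  have hPlip : ∀ x y : V, ‖P x - P y‖ ≤ ‖x - y‖ := by
    intro x y
    have h1 : ⟪x - P x, P y - P x⟫ ≤ 0 := hP x (P y) (hPK y)
    have h2 : ⟪y - P y, P x - P y⟫ ≤ 0 := hP y (P x) (hPK x)
    have key : ‖P x - P y‖ ^ 2 ≤ ⟪x - y, P x - P y⟫ := by
      have e1 : ⟪x - P x, P y - P x⟫ = - ⟪x - P x, P x - P y⟫ := by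
        rw [← inner_neg_right]; congr 1; abel
      have e2 : ⟪x - y, P x - P y⟫
          = ⟪x - P x, P x - P y⟫ - ⟪y - P y, P x - P y⟫
            + ⟪P x - P y, P x - P y⟫ := by
        rw [← inner_sub_left, ← inner_add_left]; congr 1; abel
      have e3 : ⟪P x - P y, P x - P y⟫ = ‖P x - P y‖ ^ 2 := by
        rw [real_inner_self_eq_norm_sq]
      rw [e1] at h1
      linarith
    have hle : ⟪x - y, P x - P y⟫ ≤ ‖x - y‖ * ‖P x - P y‖ :=
      real_inner_le_norm _ _
    rcases eq_or_lt_of_le (norm_nonneg (P x - P y)) with h0 | h0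
    · rw [← h0]; exact norm_nonneg _
    · nlinarith
  -- Riesz representations
  obtain ⟨A, hA⟩ : ∃ A : V → V, ∀ v w : V, ⟪A v, w⟫ = a v w :=
    ⟨fun v => (InnerProductSpace.toDual ℝ V).symm (a v),
      fun v w => InnerProductSpace.toDual_symm_apply⟩
  obtain ⟨l, hl⟩ : ∃ l : V, ∀ w : V, ⟪l, w⟫ = L w :=
    ⟨(InnerProductSpace.toDual ℝ V).symm L,
      fun w => InnerProductSpace.toDual_symm_apply⟩
  have hAsub : ∀ x y : V, A x - A y = A (x - y) := by
    intro x y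
    refine ext_inner_right ℝ fun w => ?_
    rw [inner_sub_left, hA, hA, hA, map_sub]
    simp
  set M' : ℝ := max M α with hM'def
  have hM' : 0 < M' := lt_of_lt_of_le hα (le_max_right _ _)
  have hαM' : α ≤ M' := le_max_right _ _
  have hAnorm : ∀ v : V, ‖A v‖ ≤ M' * ‖v‖ := by
    intro v
    have hsq : ‖A v‖ ^ 2 ≤ M' * ‖v‖ * ‖A v‖ := by
      rw [← real_inner_self_eq_norm_sq, hA]
      calc a v (A v) ≤ |a v (A v)| := le_abs_self _
        _ ≤ M * ‖v‖ * ‖A v‖ := hbdd v (A v)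
        _ ≤ M' * ‖v‖ * ‖A v‖ := by
            have hMM : M ≤ M' := le_max_left _ _
            exact mul_le_mul_of_nonneg_right
              (mul_le_mul_of_nonneg_right hMM (norm_nonneg v)) (norm_nonneg _)
    rcases eq_or_lt_of_le (norm_nonneg (A v)) with h0 | h0
    · rw [← h0]; positivity
    · nlinarith
  set ρ : ℝ := α / M' ^ 2 with hρdef
  have hρ : 0 < ρ := by positivity
  set c : ℝ := Real.sqrt (1 - α ^ 2 / M' ^ 2) with hcdef
  have hsq : 0 ≤ 1 - α ^ 2 / M' ^ 2 := by
    rw [sub_nonneg, div_le_one (by positivity)]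
    nlinarith
  have hc0 : 0 ≤ c := Real.sqrt_nonneg _
  have hcsq : c ^ 2 = 1 - α ^ 2 / M' ^ 2 := Real.sq_sqrt hsq
  have hc1 : c < 1 := by
    rw [hcdef]
    have : 1 - α ^ 2 / M' ^ 2 < 1 := by
      have : 0 < α ^ 2 / M' ^ 2 := by positivity
      linarith
    calc Real.sqrt (1 - α ^ 2 / M' ^ 2) < Real.sqrt 1 :=
          (Real.sqrt_lt_sqrt hsq this)
      _ = 1 := Real.sqrt_one
  -- contraction estimate
  have hcontr : ∀ z : V, ‖z - ρ • A z‖ ≤ c * ‖z‖ := by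
    intro z
    have hexp : ‖z - ρ • A z‖ ^ 2
        = ‖z‖ ^ 2 - 2 * ⟪z, ρ • A z⟫ + ‖ρ • A z‖ ^ 2 := by
      rw [@norm_sub_sq_real]
    have hin : ⟪z, ρ • A z⟫ = ρ * a z z := by
      rw [real_inner_smul_right, real_inner_comm, hA]
    have hns : ‖ρ • A z‖ ^ 2 ≤ ρ ^ 2 * (M' * ‖z‖) ^ 2 := by
      rw [norm_smul]
      have hAz := hAnorm z
      have h0 : 0 ≤ ‖A z‖ := norm_nonneg _
      simp only [Real.norm_eq_abs, abs_of_pos hρ]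
      rw [mul_pow]
      exact mul_le_mul_of_nonneg_left
        (pow_le_pow_left₀ h0 hAz 2) (by positivity)
    have hcz : a z z ≥ α * ‖z‖ ^ 2 := hcoer z
    have hbound : ‖z - ρ • A z‖ ^ 2 ≤ (c * ‖z‖) ^ 2 := by
      have expand : (c * ‖z‖) ^ 2 = (1 - α ^ 2 / M' ^ 2) * ‖z‖ ^ 2 := by
        rw [mul_pow, hcsq]
      rw [hexp, hin, expand]
      have hρval : ρ ^ 2 * (M' * ‖z‖) ^ 2 = α ^ 2 / M' ^ 2 * ‖z‖ ^ 2 := by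
        rw [hρdef]; field_simp
      have h2ρ : 2 * ρ * α = 2 * (α ^ 2 / M' ^ 2) := by
        rw [hρdef]; field_simp
      nlinarith [hns, sq_nonneg ‖z‖]
    have h1 : ‖z - ρ • A z‖ = Real.sqrt (‖z - ρ • A z‖ ^ 2) :=
      (Real.sqrt_sq (norm_nonneg _)).symm
    have h2 : c * ‖z‖ = Real.sqrt ((c * ‖z‖) ^ 2) :=
      (Real.sqrt_sq (by positivity)).symm
    rw [h1, h2]
    exact Real.sqrt_le_sqrt hbound
  -- fixed point setup
  haveI : Nonempty K := hKne.to_subtype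
  haveI : CompleteSpace K := hKcl.completeSpace_coe
  set T : K → K := fun x => ⟨P ((x : V) - ρ • (A x - l)), hPK _⟩ with hTdef
  have hTlip : ∀ x y : K, dist (T x) (T y) ≤ c * dist x y := by
    intro x y
    have hd : dist (T x) (T y)
        = ‖P ((x : V) - ρ • (A x - l)) - P ((y : V) - ρ • (A y - l))‖ := by
      simp [hTdef, Subtype.dist_eq, dist_eq_norm]
    rw [hd]
    have step1 := hPlip ((x : V) - ρ • (A x - l)) ((y : V) - ρ • (A y - l))
    have harg : (x : V) - ρ • (A x - l) - ((y : V) - ρ • (A y - l))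
        = ((x : V) - y) - ρ • A ((x : V) - y) := by
      rw [← hAsub]
      module
    rw [harg] at step1
    have step2 := hcontr ((x : V) - y)
    calc ‖P ((x : V) - ρ • (A x - l)) - P ((y : V) - ρ • (A y - l))‖
        ≤ ‖((x : V) - y) - ρ • A ((x : V) - y)‖ := step1
      _ ≤ c * ‖(x : V) - y‖ := step2
      _ = c * dist x y := by rw [Subtype.dist_eq, dist_eq_norm]
  have hcnn : (c.toNNReal : ℝ) = c := Real.coe_toNNReal c hc0
  have hT : ContractingWith c.toNNReal T := by
    constructor
    · rwa [← NNReal.coe_lt_one, hcnn]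
    · exact LipschitzWith.of_dist_le_mul fun x y => by rw [hcnn]; exact hTlip x y
  set u : K := hT.fixedPoint T with hudef
  have hfix : T u = u := hT.fixedPoint_isFixedPt
  have hfix' : P ((u : V) - ρ • (A u - l)) = (u : V) := congrArg Subtype.val hfix
  refine ⟨(u : V), ⟨u.2, ?_⟩, fun y hy => uniq y u hy ⟨u.2, ?_⟩⟩ <;>
  · intro v hv
    have hchar := hP ((u : V) - ρ • (A u - l)) v hv
    rw [hfix'] at hchar
    have harg : (u : V) - ρ • (A u - l) - (u : V) = -(ρ • (A u - l)) := by abel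
    rw [harg] at hchar
    have : 0 ≤ ρ * ⟪A u - l, v - u⟫ := by
      rw [inner_neg_left, real_inner_smul_left] at hchar
      linarith
    have hnn : 0 ≤ ⟪A u - l, v - u⟫ := nonneg_of_mul_nonneg_right this hρ
    rw [inner_sub_left, hA, hl] at hnn
    linarith
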